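/- For every list of l items with any initial order and any initial bit assignment, the MTF2 algorithm A is 2.5-competitive under the full cost model: there exists a constant b (depending only on l) such that A(σ) ≤ 2.5·OPT(σ) + b for every request sequence σ. -/

import Mathlib

namespace ListUpdate

variable {α : Type} [DecidableEq α]

/-- Swap the adjacent items at (0-based) positions `i` and `i+1`. -/
def adjSwap (L : List α) (i : ℕ) : List α :=
  L.take i ++ (match L.drop i with
    | a :: b :: t => b :: a :: t
    | t => t)

/-- An offline action for one request: a sequence of paid exchanges performed
before the access (each given by the position of the swapped pair), and the
target position for the free exchange performed after the access. -/
structure Action (α : Type) where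
  paid : List ℕ
  target : ℕ

def doPaid (L : List α) (ps : List ℕ) : List α := ps.foldl adjSwap L

/-- Move item `r` (for free) to position `min j (current position)`,
i.e. to any position not farther from the front. -/
def freeMove (L : List α) (r : α) (j : ℕ) : List α :=
  (L.erase r).insertIdx (min j (L.idxOf r)) r

/-- Cost of one offline step: one unit per paid exchange plus the access cost;
`c = 1` gives the full cost model, `c = 0` the partial cost model. -/
def stepCost (c : ℕ) (L : List α) (r : α) (a : Action α) : ℕ :=
  a.paid.length + ((doPaid L a.paid).idxOf r + c)

def stepList (L : List α) (r : α) (a : Action α) : List α :=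
  freeMove (doPaid L a.paid) r a.target

/-- Total cost of serving the request sequence with the given actions. -/
def serveCost (c : ℕ) : List α → List α → List (Action α) → ℕ
  | _, [], _ => 0
  | _, _ :: _, [] => 0
  | L, r :: σ, a :: as => stepCost c L r a + serveCost c (stepList L r a) σ as

/-- The list configuration after serving the requests with the given actions. -/
def serveList : List α → List α → List (Action α) → List α
  | L, [], _ => L
  | L, _ :: _, [] => L
  | L, r :: σ, a :: as => serveList (stepList L r a) σ as

/-- `optCost c L σ` : the optimal offline cost of serving `σ` starting from list `L`. -/
noncomputable def optCost (c : ℕ) (L : List α) (σ : List α) : ℕ :=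
  sInf { n | ∃ as : List (Action α), as.length = σ.length ∧ serveCost c L σ as = n }

/-- Cost of an MTF2 (move-to-front-every-other-access) algorithm: it keeps one bit
per item; on each request the requested item's bit is flipped and the item is moved
to the front exactly when the bit becomes `false` (i.e. 0). -/
def mtf2Cost (c : ℕ) : (α → Bool) → List α → List α → ℕ
  | _, _, [] => 0
  | bits, L, r :: σ =>
    (L.idxOf r + c) +
      mtf2Cost c (Function.update bits r (!bits r))
        (if !bits r then L else r :: L.erase r) σ

/-- Final list of an MTF2 algorithm. -/
def mtf2List : (α → Bool) → List α → List α → List α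
  | _, L, [] => L
  | bits, L, r :: σ =>
      mtf2List (Function.update bits r (!bits r))
        (if !bits r then L else r :: L.erase r) σ

/-- MTFO moves the requested item to the front on every odd request to it:
this is MTF2 with all bits initially 1. -/
def mtfoCost (c : ℕ) (L σ : List α) : ℕ := mtf2Cost c (fun _ => true) L σ

/-- MTFE moves the requested item to the front on every even request to it:
this is MTF2 with all bits initially 0. -/
def mtfeCost (c : ℕ) (L σ : List α) : ℕ := mtf2Cost c (fun _ => false) L σ

/-- One step of TS (Timestamp). `h` is the list of previous requests, most recent
first. The requested item `x` is inserted in front of the first item of the list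
that precedes `x` and was requested at most once since the last request to `x`;
if there is no such item, or this is the first request to `x`, nothing moves. -/
def tsStep (h : List α) (L : List α) (x : α) : List α :=
  if x ∈ h then
    let cnt : α → ℕ := fun z => (h.takeWhile (fun w => decide (w ≠ x))).count z
    let pre := L.takeWhile (fun w => decide (w ≠ x))
    let keep := pre.takeWhile (fun z => decide (2 ≤ cnt z))
    keep ++ x :: (pre.drop keep.length ++ (L.dropWhile (fun w => decide (w ≠ x))).tail)
  else L

/-- Cost of TS; `h` is the history of previous requests, most recent first
(initially `[]`). -/
def tsCost (c : ℕ) : List α → List α → List α → ℕ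
  | _, _, [] => 0
  | h, L, r :: σ => (L.idxOf r + c) + tsCost c (r :: h) (tsStep h L r) σ

/-- An online algorithm with advice: its action may depend on the advice tape and
on the sequence of requests seen so far (ending with the current request). -/
def OnlineAdviceAlg (α : Type) := (ℕ → Bool) → List α → Action α

/-- Total cost of running the online algorithm `A` with advice tape `φ`:
`past` is the reversed-free list of requests served so far (oldest first). -/
def runAdvCost (c : ℕ) (A : OnlineAdviceAlg α) (φ : ℕ → Bool) :
    List α → List α → List α → ℕ
  | _, _, [] => 0
  | past, L, r :: σ =>
      stepCost c L r (A φ (past ++ [r])) +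
        runAdvCost c A φ (past ++ [r]) (stepList L r (A φ (past ++ [r]))) σ

/-- `A`, run on `σ` with tape `φ`, reads at most the first `k` bits of advice:
its behaviour on every step of `σ` is unchanged if the tape is modified
beyond position `k`. -/
def UsesAdvice (A : OnlineAdviceAlg α) (φ : ℕ → Bool) (σ : List α) (k : ℕ) : Prop :=
  ∀ ψ : ℕ → Bool, (∀ i < k, ψ i = φ i) →
    ∀ t, 0 < t → t ≤ σ.length → A ψ (σ.take t) = A φ (σ.take t)

end ListUpdate

open ListUpdate

namespace MTF2Proof
open List ListUpdate

variable {α : Type} [DecidableEq α]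

def phi : Bool → Bool → Bool → Bool → ℤ
  | false, false, false, false => 0
  | false, false, false, true  => 4
  | false, false, true,  false => 0
  | false, false, true,  true  => 5
  | false, true,  false, false => 1
  | false, true,  false, true  => 2
  | false, true,  true,  false => 1
  | false, true,  true,  true  => 3
  | true,  false, false, false => 4
  | true,  false, false, true  => 0
  | true,  false, true,  false => 2
  | true,  false, true,  true  => 1
  | true,  true,  false, false => 5
  | true,  true,  false, true  => 0
  | true,  true,  true,  false => 3
  | true,  true,  true,  true  => 1

lemma phi_nonneg : ∀ a b c d, 0 ≤ phi a b c d := by decide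
lemma phi_le : ∀ a b c d, phi a b c d ≤ 5 := by decide
lemma phi_symm : ∀ a b c d, phi (!a) c b (!d) = phi a b c d := by decide
lemma phi_flip : ∀ a b c d d', phi a b c d' ≤ phi a b c d + 5 := by decide
lemma phi_key : ∀ (oA bx b2 oO oO' : Bool), (oO = true → oO' = true) →
    2 * (if oA then 0 else 1) + phi (bx || oA) (!bx) b2 oO'
      ≤ 5 * (if oO then 0 else 1) + phi oA bx b2 oO := by decide

/-- `x` strictly before `y` in list `M`. -/
def bef (M : List α) (x y : α) : Bool := decide (M.idxOf x < M.idxOf y)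

lemma bef_cons_ne (M : List α) {r x y : α} (hx : x ≠ r) (hy : y ≠ r) :
    bef (r :: M) x y = bef M x y := by
  unfold bef
  rw [idxOf_cons_ne _ (Ne.symm hx), idxOf_cons_ne _ (Ne.symm hy)]
  apply decide_eq_decide.2
  omega

lemma bef_cons_self (M : List α) {r y : α} (hy : y ≠ r) : bef (r :: M) r y = true := by
  unfold bef
  rw [idxOf_cons_self, idxOf_cons_ne _ (Ne.symm hy)]
  simp

lemma bef_mid (u v : List α) (r : α) {x y : α} (hx : x ≠ r) (hy : y ≠ r) :
    bef (u ++ r :: v) x y = bef (u ++ v) x y := by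
  unfold bef
  apply decide_eq_decide.2
  by_cases hxu : x ∈ u
  · rw [idxOf_append_of_mem hxu, idxOf_append_of_mem hxu]
    by_cases hyu : y ∈ u
    · rw [idxOf_append_of_mem hyu, idxOf_append_of_mem hyu]
    · rw [idxOf_append_of_notMem hyu, idxOf_append_of_notMem hyu,
        idxOf_cons_ne _ (Ne.symm hy)]
      have := idxOf_lt_length_iff.2 hxu
      omega
  · rw [idxOf_append_of_notMem hxu, idxOf_append_of_notMem hxu,
      idxOf_cons_ne _ (Ne.symm hx)]
    by_cases hyu : y ∈ u
    · rw [idxOf_append_of_mem hyu, idxOf_append_of_mem hyu]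
      have := idxOf_lt_length_iff.2 hyu
      omega
    · rw [idxOf_append_of_notMem hyu, idxOf_append_of_notMem hyu,
        idxOf_cons_ne _ (Ne.symm hy)]
      omega

lemma bef_erase (M : List α) {r x y : α} (hr : r ∈ M) (hx : x ≠ r) (hy : y ≠ r) :
    bef (M.erase r) x y = bef M x y := by
  obtain ⟨u, v, hru, hM, hE⟩ := exists_erase_eq hr
  rw [hE, hM, bef_mid u v r hx hy]

lemma bef_swap {M : List α} {x y : α} (hx : x ∈ M) (hy : y ∈ M) (hxy : x ≠ y) :
    bef M y x = !bef M x y := by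
  have hne : M.idxOf x ≠ M.idxOf y := fun h => hxy ((idxOf_inj hx).1 h)
  unfold bef
  rw [← decide_not]
  apply decide_eq_decide.2
  omega

lemma indexOf_lt_of_mem_take {l : List α} {n : ℕ} {x : α} (h : x ∈ l.take n) :
    l.idxOf x < n := by
  have h1 : l.idxOf x = (l.take n).idxOf x := by
    conv_lhs => rw [← take_append_drop n l]
    rw [idxOf_append_of_mem h]
  have h2 := idxOf_lt_length_iff.2 h
  rw [length_take] at h2
  omega

lemma mem_take_of_indexOf_lt {l : List α} {x : α} (hx : x ∈ l) :
    ∀ {n : ℕ}, l.idxOf x < n → x ∈ l.take n := by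
  induction l with
  | nil => cases hx
  | cons a t ih =>
    intro n h
    cases n with
    | zero => omega
    | succ n =>
      by_cases hxa : x = a
      · subst hxa; simp
      · rw [idxOf_cons_ne _ (Ne.symm hxa)] at h
        have hxt : x ∈ t := by
          rcases mem_cons.1 hx with h' | h'
          · exact absurd h' hxa
          · exact h'
        simp only [take_succ_cons, mem_cons]
        exact Or.inr (ih hxt (by omega))
lemma insertIdx_eq_take_cons_drop (a : α) :
    ∀ (n : ℕ) (l : List α), n ≤ l.length → l.insertIdx n a = l.take n ++ a :: l.drop n
  | 0, l, _ => by simp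
  | n+1, [], h => by simp at h
  | n+1, b :: l, h => by
    rw [insertIdx_succ_cons, insertIdx_eq_take_cons_drop a n l (by simpa using h)]
    simp

lemma freeMove_eq (M : List α) (r : α) (j : ℕ) (hr : r ∈ M) :
    freeMove M r j = (M.erase r).take (min j (M.idxOf r))
      ++ r :: (M.erase r).drop (min j (M.idxOf r)) := by
  unfold freeMove
  apply insertIdx_eq_take_cons_drop
  have h1 : M.idxOf r < M.length := idxOf_lt_length_iff.2 hr
  have h2 : (M.erase r).length = M.length - 1 := length_erase_of_mem hr
  omega

lemma bef_freeMove_other (M : List α) (r : α) (j : ℕ) {x y : α} (hr : r ∈ M)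
    (hx : x ≠ r) (hy : y ≠ r) : bef (freeMove M r j) x y = bef M x y := by
  rw [freeMove_eq M r j hr, bef_mid _ _ r hx hy, take_append_drop,
    bef_erase M hr hx hy]

lemma indexOf_erase_ge (M : List α) {r y : α} (hr : r ∈ M) (hy : y ≠ r)
    (h : M.idxOf r < M.idxOf y) : M.idxOf r ≤ (M.erase r).idxOf y := by
  obtain ⟨u, v, hru, hM, hE⟩ := exists_erase_eq hr
  have hur : M.idxOf r = u.length := by
    rw [hM, idxOf_append_of_notMem hru, idxOf_cons_self]; omega
  by_cases hyu : y ∈ u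
  · exfalso
    have h1 : M.idxOf y < u.length := by
      rw [hM, idxOf_append_of_mem hyu]
      exact idxOf_lt_length_iff.2 hyu
    omega
  · rw [hE, idxOf_append_of_notMem hyu]
    omega

lemma bef_freeMove_keep (M : List α) (r y : α) (j : ℕ) (hN : M.Nodup) (hr : r ∈ M)
    (hy : y ∈ M) (hyr : y ≠ r) (h : bef M r y = true) :
    bef (freeMove M r j) r y = true := by
  have h' : M.idxOf r < M.idxOf y := by
    simpa [bef] using h
  have hrE : r ∉ M.erase r := hN.not_mem_erase
  have hrlt : M.idxOf r < M.length := idxOf_lt_length_iff.2 hr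
  have hlE : (M.erase r).length = M.length - 1 := length_erase_of_mem hr
  set m := min j (M.idxOf r) with hm
  have hEy : M.idxOf r ≤ (M.erase r).idxOf y := indexOf_erase_ge M hr hyr h'
  rw [freeMove_eq M r j hr]
  have hrt : r ∉ (M.erase r).take m := fun hc => hrE (mem_of_mem_take hc)
  have hyt : y ∉ (M.erase r).take m := by
    intro hc
    have := indexOf_lt_of_mem_take hc
    omega
  unfold bef
  rw [idxOf_append_of_notMem hrt, idxOf_append_of_notMem hyt,
    idxOf_cons_self, idxOf_cons_ne _ (Ne.symm hyr)]
  simp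

lemma freeMove_perm (M : List α) (r : α) (j : ℕ) (hr : r ∈ M) :
    freeMove M r j ~ M := by
  rw [freeMove_eq M r j hr]
  calc (M.erase r).take (min j (M.idxOf r)) ++ r :: (M.erase r).drop (min j (M.idxOf r))
      ~ r :: ((M.erase r).take (min j (M.idxOf r)) ++ (M.erase r).drop (min j (M.idxOf r))) :=
        perm_middle
    _ = r :: M.erase r := by rw [take_append_drop]
    _ ~ M := (perm_cons_erase hr).symm

lemma adjSwap_eq_self (M : List α) (i : ℕ) (h : ¬ i + 1 < M.length) : adjSwap M i = M := by
  unfold adjSwap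
  rcases hd : M.drop i with _ | ⟨a, _ | ⟨b, t⟩⟩
  · rw [show (M.take i ++ [] : List α) = M.take i ++ M.drop i by rw [hd],
      take_append_drop]
  · rw [show (M.take i ++ [a] : List α) = M.take i ++ M.drop i by rw [hd],
      take_append_drop]
  · exfalso
    have := congrArg List.length hd
    simp [length_drop] at this
    omega

lemma adjSwap_cases (M : List α) (hN : M.Nodup) (i : ℕ) :
    adjSwap M i = M ∨
    ∃ a b, a ∈ M ∧ b ∈ M ∧ a ≠ b ∧
      (∀ x y : α, ¬(x = a ∧ y = b) → ¬(x = b ∧ y = a) →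
        bef (adjSwap M i) x y = bef M x y) := by
  by_cases h : i + 1 < M.length
  · rcases hd : M.drop i with _ | ⟨a, _ | ⟨b, t⟩⟩
    · exfalso; have := congrArg List.length hd; simp [length_drop] at this; omega
    · exfalso; have := congrArg List.length hd; simp [length_drop] at this; omega
    right
    have hM : M = M.take i ++ a :: b :: t := by rw [← hd, take_append_drop]
    have hF : adjSwap M i = M.take i ++ b :: a :: t := by
      unfold adjSwap; rw [hd]
    have hab : a ≠ b := by
      have hnd : (a :: b :: t).Nodup := by
        rw [← hd]; exact (drop_sublist i M).nodup hN
      have := nodup_cons.1 hnd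
      intro hab'; exact this.1 (hab' ▸ mem_cons_self)
    refine ⟨a, b, by rw [hM]; simp, by rw [hM]; simp, hab, ?_⟩
    intro x y hxy1 hxy2
    by_cases hb : x ≠ b ∧ y ≠ b
    · -- remove b from both lists
      have e1 : bef (adjSwap M i) x y = bef (M.take i ++ a :: t) x y := by
        rw [hF, bef_mid _ _ b hb.1 hb.2]
      have e2 : bef M x y = bef (M.take i ++ a :: t) x y := by
        conv_lhs => rw [hM]
        have ha1 : M.take i ++ a :: b :: t = (M.take i ++ [a]) ++ b :: t := by simp
        have ha2 : (M.take i ++ [a]) ++ t = M.take i ++ a :: t := by simp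
        rw [ha1, bef_mid _ _ b hb.1 hb.2, ha2]
      rw [e1, e2]
    · -- then x ≠ a and y ≠ a; remove a from both lists
      have hxa : x ≠ a := by
        rintro rfl
        rcases not_and_or.1 hb with h' | h'
        · exact hab (not_not.1 h')
        · exact hxy1 ⟨rfl, not_not.1 h'⟩
      have hya : y ≠ a := by
        rintro rfl
        rcases not_and_or.1 hb with h' | h'
        · exact hxy2 ⟨not_not.1 h', rfl⟩
        · exact hab (not_not.1 h')
      have e1 : bef (adjSwap M i) x y = bef (M.take i ++ b :: t) x y := by
        rw [hF]
        have ha1 : M.take i ++ b :: a :: t = (M.take i ++ [b]) ++ a :: t := by simp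
        have ha2 : (M.take i ++ [b]) ++ t = M.take i ++ b :: t := by simp
        rw [ha1, bef_mid _ _ a hxa hya, ha2]
      have e2 : bef M x y = bef (M.take i ++ b :: t) x y := by
        conv_lhs => rw [hM]
        rw [bef_mid _ _ a hxa hya]
      rw [e1, e2]
  · left; exact adjSwap_eq_self M i h

lemma adjSwap_perm (M : List α) (i : ℕ) : adjSwap M i ~ M := by
  by_cases h : i + 1 < M.length
  · rcases hd : M.drop i with _ | ⟨a, _ | ⟨b, t⟩⟩
    · exfalso; have := congrArg List.length hd; simp [length_drop] at this; omega
    · exfalso; have := congrArg List.length hd; simp [length_drop] at this; omega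
    · have hM : M = M.take i ++ a :: b :: t := by rw [← hd, take_append_drop]
      have hF : adjSwap M i = M.take i ++ b :: a :: t := by
        unfold adjSwap; rw [hd]
      rw [hF]
      conv_rhs => rw [hM]
      exact Perm.append_left _ (Perm.swap a b t)
  · rw [adjSwap_eq_self M i h]

lemma sum_bef (M : List α) (hN : M.Nodup) (r : α) (hr : r ∈ M) :
    ∑ y ∈ M.toFinset.erase r, (if bef M y r then (1 : ℤ) else 0) = M.idxOf r := by
  classical
  rw [Finset.sum_boole]
  have hset : (M.toFinset.erase r).filter (fun y => bef M y r)
      = (M.take (M.idxOf r)).toFinset := by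
    ext z
    simp only [Finset.mem_filter, Finset.mem_erase, List.mem_toFinset, bef,
      decide_eq_true_eq]
    constructor
    · rintro ⟨⟨hzr, hz⟩, hlt⟩
      exact mem_take_of_indexOf_lt hz hlt
    · intro hz
      have hz1 : z ∈ M := mem_of_mem_take hz
      have hz2 : M.idxOf z < M.idxOf r := indexOf_lt_of_mem_take hz
      exact ⟨⟨fun h => by subst h; omega, hz1⟩, hz2⟩
  rw [hset]
  have hnd : (M.take (M.idxOf r)).Nodup := (take_sublist _ _).nodup hN
  rw [toFinset_card_of_nodup hnd, length_take]
  have := idxOf_lt_length_iff.2 hr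
  simp
  omega
def term (LA : List α) (bits : α → Bool) (LO : List α) (x y : α) : ℤ :=
  phi (bef LA x y) (bits x) (bits y) (bef LO x y)

def pot (S : Finset α) (LA : List α) (bits : α → Bool) (LO : List α) : ℤ :=
  ∑ x ∈ S, ∑ y ∈ S.erase x, term LA bits LO x y

lemma pot_nonneg (S : Finset α) (LA : List α) (bits : α → Bool) (LO : List α) :
    0 ≤ pot S LA bits LO :=
  Finset.sum_nonneg fun _ _ => Finset.sum_nonneg fun _ _ => phi_nonneg _ _ _ _

lemma pot_le (S : Finset α) (LA : List α) (bits : α → Bool) (LO : List α) :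
    pot S LA bits LO ≤ 5 * (S.card : ℤ) * S.card := by
  unfold pot
  calc ∑ x ∈ S, ∑ y ∈ S.erase x, term LA bits LO x y
      ≤ ∑ x ∈ S, ∑ y ∈ S.erase x, (5 : ℤ) := by
        apply Finset.sum_le_sum; intro x _
        apply Finset.sum_le_sum; intro y _
        exact phi_le _ _ _ _
    _ = ∑ x ∈ S, ((S.erase x).card : ℤ) * 5 := by
        simp [Finset.sum_const, nsmul_eq_mul]
    _ ≤ ∑ x ∈ S, (S.card : ℤ) * 5 := by
        apply Finset.sum_le_sum; intro x _
        have h := Finset.card_erase_le (a := x) (s := S)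
        have h' : ((S.erase x).card : ℤ) ≤ (S.card : ℤ) := by exact_mod_cast h
        nlinarith
    _ = 5 * (S.card : ℤ) * S.card := by
        rw [Finset.sum_const, nsmul_eq_mul]; ring

lemma double_sum_split (S : Finset α) (r : α) (hr : r ∈ S) (T : α → α → ℤ) :
    ∑ x ∈ S, ∑ y ∈ S.erase x, T x y
      = (∑ y ∈ S.erase r, (T r y + T y r))
        + ∑ x ∈ S.erase r, ∑ y ∈ (S.erase x).erase r, T x y := by
  rw [← Finset.add_sum_erase S _ hr]
  have h1 : ∀ x ∈ S.erase r, ∑ y ∈ S.erase x, T x y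
      = T x r + ∑ y ∈ (S.erase x).erase r, T x y := by
    intro x hx
    obtain ⟨hxr, hxS⟩ := Finset.mem_erase.1 hx
    exact (Finset.add_sum_erase _ _ (Finset.mem_erase.2 ⟨Ne.symm hxr, hr⟩)).symm
  rw [Finset.sum_congr rfl h1, Finset.sum_add_distrib, Finset.sum_add_distrib]
  ring

lemma pot_adjSwap (S : Finset α) (LA LO : List α) (bits : α → Bool)
    (hS : LO.toFinset = S) (hN : LO.Nodup) (i : ℕ) :
    pot S LA bits (adjSwap LO i) ≤ pot S LA bits LO + 10 := by
  rcases adjSwap_cases LO hN i with h | ⟨a, b, haM, hbM, hab, hpres⟩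
  · rw [h]; linarith
  · have haS : a ∈ S := by rw [← hS]; exact mem_toFinset.2 haM
    have hbS : b ∈ S.erase a := Finset.mem_erase.2 ⟨Ne.symm hab, by rw [← hS]; exact mem_toFinset.2 hbM⟩
    unfold pot
    rw [double_sum_split S a haS (term LA bits (adjSwap LO i)),
      double_sum_split S a haS (term LA bits LO)]
    have hrest : (∑ x ∈ S.erase a, ∑ y ∈ (S.erase x).erase a, term LA bits (adjSwap LO i) x y)
        = ∑ x ∈ S.erase a, ∑ y ∈ (S.erase x).erase a, term LA bits LO x y := by
      apply Finset.sum_congr rfl; intro x hx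
      apply Finset.sum_congr rfl; intro y hy
      obtain ⟨hxa, _⟩ := Finset.mem_erase.1 hx
      obtain ⟨hya, _⟩ := Finset.mem_erase.1 hy
      unfold term
      rw [hpres x y (fun h' => hxa h'.1) (fun h' => hya h'.2)]
    have hpair : (∑ y ∈ S.erase a, (term LA bits (adjSwap LO i) a y + term LA bits (adjSwap LO i) y a))
        ≤ (∑ y ∈ S.erase a, (term LA bits LO a y + term LA bits LO y a)) + 10 := by
      rw [← Finset.add_sum_erase _ _ hbS, ← Finset.add_sum_erase _ (fun y => term LA bits LO a y + term LA bits LO y a) hbS]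
      have hrest2 : (∑ y ∈ (S.erase a).erase b, (term LA bits (adjSwap LO i) a y + term LA bits (adjSwap LO i) y a))
          = ∑ y ∈ (S.erase a).erase b, (term LA bits LO a y + term LA bits LO y a) := by
        apply Finset.sum_congr rfl; intro y hy
        obtain ⟨hyb, hy'⟩ := Finset.mem_erase.1 hy
        obtain ⟨hya, _⟩ := Finset.mem_erase.1 hy'
        unfold term
        rw [hpres a y (fun h' => hyb h'.2) (fun h' => hab h'.1),
          hpres y a (fun h' => hab h'.2) (fun h' => hyb h'.1)]
      have h1 : term LA bits (adjSwap LO i) a b ≤ term LA bits LO a b + 5 := phi_flip _ _ _ _ _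
      have h2 : term LA bits (adjSwap LO i) b a ≤ term LA bits LO b a + 5 := phi_flip _ _ _ _ _
      rw [hrest2]
      linarith
    linarith

lemma doPaid_perm (M : List α) : ∀ ps : List ℕ, doPaid M ps ~ M := by
  intro ps
  induction ps generalizing M with
  | nil => exact Perm.refl M
  | cons p ps ih =>
    have h1 : doPaid M (p :: ps) = doPaid (adjSwap M p) ps := rfl
    rw [h1]
    exact (ih (adjSwap M p)).trans (adjSwap_perm M p)

lemma pot_doPaid (S : Finset α) (LA : List α) (bits : α → Bool) :
    ∀ (ps : List ℕ) (LO : List α), LO.toFinset = S → LO.Nodup →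
      pot S LA bits (doPaid LO ps) ≤ pot S LA bits LO + 10 * (ps.length : ℤ)
  | [], LO, _, _ => by simp [doPaid]
  | p :: ps, LO, hS, hN => by
    have h1 := pot_adjSwap S LA LO bits hS hN p
    have hperm := adjSwap_perm LO p
    have h2 := pot_doPaid S LA bits ps (adjSwap LO p)
      ((toFinset_eq_of_perm _ _ hperm).trans hS) (hperm.symm.nodup hN)
    have h3 : doPaid LO (p :: ps) = doPaid (adjSwap LO p) ps := rfl
    rw [h3]
    have hlen : (((p :: ps).length : ℕ) : ℤ) = (ps.length : ℤ) + 1 := by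
      simp [List.length_cons]
    rw [hlen]
    linarith
lemma access_bound (L : List α) (hLN : L.Nodup) (LA O' : List α) (bits : α → Bool)
    (r : α) (t : ℕ) (hA : LA ~ L) (hO : O' ~ L) (hr : r ∈ L) :
    4 * ((LA.idxOf r : ℤ) + 1)
      + pot L.toFinset (if !bits r then LA else r :: LA.erase r)
          (Function.update bits r (!bits r)) (freeMove O' r t)
      ≤ 10 * ((O'.idxOf r : ℤ) + 1) + pot L.toFinset LA bits O' := by
  set S := L.toFinset with hSdef
  have hAN : LA.Nodup := hA.symm.nodup hLN
  have hON : O'.Nodup := hO.symm.nodup hLN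
  have hrA : r ∈ LA := hA.mem_iff.2 hr
  have hrO : r ∈ O' := hO.mem_iff.2 hr
  have hrS : r ∈ S := mem_toFinset.2 hr
  set A' := (if !bits r then LA else r :: LA.erase r) with hA'def
  set bits' := Function.update bits r (!bits r) with hbits'def
  set F := freeMove O' r t with hFdef
  have hA'perm : A' ~ LA := by
    rw [hA'def]
    cases hbx : bits r
    · simp [hbx]
    · rw [if_neg (by decide)]
      exact (perm_cons_erase hrA).symm
  have hA'N : A'.Nodup := hA'perm.symm.nodup hAN
  have hFperm : F ~ O' := freeMove_perm O' r t hrO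
  have hFN : F.Nodup := hFperm.symm.nodup hON
  have hbefA' : ∀ x y : α, x ≠ r → y ≠ r → bef A' x y = bef LA x y := by
    intro x y hx hy
    rw [hA'def]
    cases hbx : bits r
    · simp [hbx]
    · rw [if_neg (by decide)]
      rw [bef_cons_ne _ hx hy, bef_erase LA hrA hx hy]
  unfold pot
  rw [double_sum_split S r hrS (term A' bits' F),
    double_sum_split S r hrS (term LA bits O')]
  have hrest : (∑ x ∈ S.erase r, ∑ y ∈ (S.erase x).erase r, term A' bits' F x y)
      = ∑ x ∈ S.erase r, ∑ y ∈ (S.erase x).erase r, term LA bits O' x y := by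
    apply Finset.sum_congr rfl; intro x hx
    apply Finset.sum_congr rfl; intro y hy
    obtain ⟨hxr, _⟩ := Finset.mem_erase.1 hx
    obtain ⟨hyr, _⟩ := Finset.mem_erase.1 hy
    unfold term
    rw [hbefA' x y hxr hyr, hFdef, bef_freeMove_other O' r t hrO hxr hyr, hbits'def,
      Function.update_of_ne hxr, Function.update_of_ne hyr]
  have hSA : S = LA.toFinset := (toFinset_eq_of_perm _ _ hA.symm)
  have hSO : S = O'.toFinset := (toFinset_eq_of_perm _ _ hO.symm)
  have hcostA : (LA.idxOf r : ℤ) = ∑ y ∈ S.erase r, (if bef LA y r then (1 : ℤ) else 0) := by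
    rw [hSA, sum_bef LA hAN r hrA]
  have hcostO : (O'.idxOf r : ℤ) = ∑ y ∈ S.erase r, (if bef O' y r then (1 : ℤ) else 0) := by
    rw [hSO, sum_bef O' hON r hrO]
  have hpt : ∀ y ∈ S.erase r,
      4 * (if bef LA y r then (1 : ℤ) else 0) + (term A' bits' F r y + term A' bits' F y r)
      ≤ 10 * (if bef O' y r then (1 : ℤ) else 0)
        + (term LA bits O' r y + term LA bits O' y r) := by
    intro y hy
    obtain ⟨hyr, hyS⟩ := Finset.mem_erase.1 hy
    have hyL : y ∈ L := mem_toFinset.1 hyS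
    have hyA : y ∈ LA := hA.mem_iff.2 hyL
    have hyO : y ∈ O' := hO.mem_iff.2 hyL
    have hyA' : y ∈ A' := hA'perm.mem_iff.2 hyA
    have hrA' : r ∈ A' := hA'perm.mem_iff.2 hrA
    have hyF : y ∈ F := hFperm.mem_iff.2 hyO
    have hrF : r ∈ F := hFperm.mem_iff.2 hrO
    have hry : r ≠ y := fun h => hyr h.symm
    -- abbreviations
    set oA := bef LA r y with hoA
    set oO := bef O' r y with hoO
    set oO' := bef F r y with hoO'
    set bx := bits r with hbx
    set b2 := bits y with hb2
    have hswA : bef LA y r = !oA := bef_swap hrA hyA hry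
    have hswO : bef O' y r = !oO := bef_swap hrO hyO hry
    have hswA' : bef A' y r = !(bef A' r y) := bef_swap hrA' hyA' hry
    have hswF : bef F y r = !oO' := bef_swap hrF hyF hry
    have hoA' : bef A' r y = (bx || oA) := by
      rw [hA'def]
      cases h : bx
      · simp [h, hoA]
      · rw [if_neg (by simp), bef_cons_self _ hyr]
        simp
    have hkeep : oO = true → oO' = true := fun h =>
      bef_freeMove_keep O' r y t hON hrO hyO hyr h
    have hb2' : bits' y = b2 := Function.update_of_ne hyr _ _
    have hbx' : bits' r = !bx := Function.update_self _ _ _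
    have ht1 : term A' bits' F r y = phi (bx || oA) (!bx) b2 oO' := by
      unfold term; rw [hoA', hb2', hbx']
    have ht2 : term A' bits' F y r = phi (bx || oA) (!bx) b2 oO' := by
      unfold term; rw [hswA', hswF, hoA', hb2', hbx']
      exact phi_symm _ _ _ _
    have ht3 : term LA bits O' r y = phi oA bx b2 oO := rfl
    have ht4 : term LA bits O' y r = phi oA bx b2 oO := by
      unfold term; rw [hswA, hswO]
      exact phi_symm _ _ _ _
    have hkey := phi_key oA bx b2 oO oO' hkeep
    rw [ht1, ht2, ht3, ht4, hswA, hswO]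
    have e1 : (if (!oA) = true then (1:ℤ) else 0) = (if oA = true then 0 else 1) := by
      cases oA <;> simp
    have e2 : (if (!oO) = true then (1:ℤ) else 0) = (if oO = true then 0 else 1) := by
      cases oO <;> simp
    rw [e1, e2]
    linarith [hkey]
  have hsum := Finset.sum_le_sum hpt
  simp only [Finset.sum_add_distrib, ← Finset.mul_sum] at hsum
  rw [← hcostA, ← hcostO] at hsum
  simp only [Finset.sum_add_distrib]
  linarith [hrest, hsum]
lemma step_bound (L : List α) (hLN : L.Nodup) (LA LO : List α) (bits : α → Bool)
    (r : α) (a : Action α) (hA : LA ~ L) (hO : LO ~ L) (hr : r ∈ L) :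
    4 * ((LA.idxOf r : ℤ) + 1)
      + pot L.toFinset (if !bits r then LA else r :: LA.erase r)
          (Function.update bits r (!bits r)) (stepList LO r a)
      ≤ 10 * (stepCost 1 LO r a : ℤ) + pot L.toFinset LA bits LO := by
  set O' := doPaid LO a.paid with hO'def
  have hO'perm : O' ~ LO := doPaid_perm LO a.paid
  have hON : LO.Nodup := hO.symm.nodup hLN
  have hpaid := pot_doPaid L.toFinset LA bits a.paid LO
    (toFinset_eq_of_perm _ _ hO) hON
  have hacc := access_bound L hLN LA O' bits r a.target hA (hO'perm.trans hO) hr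
  have hsl : stepList LO r a = freeMove O' r a.target := rfl
  have hsc : (stepCost 1 LO r a : ℤ) = (a.paid.length : ℤ) + ((O'.idxOf r : ℤ) + 1) := by
    unfold stepCost
    push_cast
    ring
  rw [hsl, hsc]
  rw [← hO'def] at hpaid
  linarith

lemma main (L : List α) (hLN : L.Nodup) (σ : List α) :
    ∀ (as : List (Action α)) (LA LO : List α) (bits : α → Bool),
      as.length = σ.length → LA ~ L → LO ~ L → (∀ r ∈ σ, r ∈ L) →
      4 * (mtf2Cost 1 bits LA σ : ℤ)
        ≤ 10 * (serveCost 1 LO σ as : ℤ) + pot L.toFinset LA bits LO := by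
  induction σ with
  | nil =>
    intro as LA LO bits _ _ _ _
    simp only [mtf2Cost, serveCost, Nat.cast_zero, mul_zero]
    have := pot_nonneg L.toFinset LA bits LO
    linarith
  | cons r σ ih =>
    intro as LA LO bits hlen hA hO hmem
    rcases as with _ | ⟨a, as⟩
    · simp at hlen
    have hr : r ∈ L := hmem r mem_cons_self
    have hrA : r ∈ LA := hA.mem_iff.2 hr
    have hrO : r ∈ LO := hO.mem_iff.2 hr
    have hA' : (if !bits r then LA else r :: LA.erase r) ~ L := by
      cases hbx : bits r
      · simpa [hbx] using hA
      · rw [if_neg (by decide)]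
        exact ((perm_cons_erase hrA).symm).trans hA
    have hO'perm : doPaid LO a.paid ~ LO := doPaid_perm LO a.paid
    have hF : stepList LO r a ~ L := by
      have h1 : stepList LO r a = freeMove (doPaid LO a.paid) r a.target := rfl
      rw [h1]
      exact (freeMove_perm _ r a.target (hO'perm.mem_iff.2 hrO)).trans (hO'perm.trans hO)
    have hIH := ih as _ (stepList LO r a) (Function.update bits r (!bits r))
      (by simpa using hlen) hA' hF (fun z hz => hmem z (mem_cons_of_mem _ hz))
    have hstep := step_bound L hLN LA LO bits r a hA hO hr
    have hm : mtf2Cost 1 bits LA (r :: σ)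
        = (LA.idxOf r + 1)
          + mtf2Cost 1 (Function.update bits r (!bits r))
            (if !bits r then LA else r :: LA.erase r) σ := rfl
    have hs : serveCost 1 LO (r :: σ) (a :: as)
        = stepCost 1 LO r a + serveCost 1 (stepList LO r a) σ as := rfl
    rw [hm, hs]
    push_cast
    push_cast at hIH
    linarith
end MTF2Proof



/-- For every list of `l` items with any initial order and any initial bit assignment,
the MTF2 algorithm is `2.5`-competitive under the full cost model: there is a constant
`b` depending only on `l` such that `MTF2(σ) ≤ 2.5·OPT(σ) + b` for every request
sequence `σ`. -/
theorem mtf2_upper_bound (l : ℕ) :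
    ∃ b : ℝ, ∀ (α : Type) (_ : DecidableEq α) (L : List α), L.Nodup → L.length = l →
      ∀ (bits : α → Bool) (σ : List α), (∀ r ∈ σ, r ∈ L) →
        (mtf2Cost 1 bits L σ : ℝ) ≤ 2.5 * (optCost 1 L σ : ℝ) + b := by
  classical
  refine ⟨5 * l * l / 2, ?_⟩
  intro α _ L hN hlen bits σ hmem
  have hne : {n | ∃ as : List (Action α), as.length = σ.length ∧ serveCost 1 L σ as = n}.Nonempty :=
    ⟨serveCost 1 L σ (σ.map fun _ => ⟨[], 0⟩), σ.map fun _ => ⟨[], 0⟩, by simp, rfl⟩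
  obtain ⟨as, hlenas, hserve⟩ := Nat.sInf_mem hne
  have hmain := MTF2Proof.main L hN σ as L L bits hlenas (List.Perm.refl L)
    (List.Perm.refl L) hmem
  have hpot := MTF2Proof.pot_le L.toFinset L bits L
  have hcard : (L.toFinset.card : ℤ) = (l : ℤ) := by
    rw [List.toFinset_card_of_nodup hN, hlen]
  rw [hcard] at hpot
  have hopt : optCost 1 L σ = serveCost 1 L σ as := by
    unfold optCost; exact hserve.symm
  have hZ : 4 * (mtf2Cost 1 bits L σ : ℤ) ≤ 10 * (optCost 1 L σ : ℤ) + 5 * l * l := by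
    rw [hopt]; linarith
  have hR : 4 * (mtf2Cost 1 bits L σ : ℝ) ≤ 10 * (optCost 1 L σ : ℝ) + 5 * l * l := by
    exact_mod_cast hZ
  have hl : (0:ℝ) ≤ (l:ℝ) * l := by positivity
  have ho : (0:ℝ) ≤ (optCost 1 L σ : ℝ) := Nat.cast_nonneg _
  norm_num
  linarith
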